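/- The derivative of the fairness gap at ε = 0 equals ((n−1)/(2n²))·(μ⁰ − μ¹), where μ^a = Σ_ρ ρ·f^a(ρ) is the conditional mean score of group a. -/

import Mathlib

open Real Finset

theorem stmt_14 (R : Finset ℝ) (f f0 f1 : ℝ → ℝ)
    (hf0 : ∀ ρ ∈ R, 0 ≤ f ρ) (hfs : ∑ ρ ∈ R, f ρ = 1)
    (hs0 : ∑ ρ ∈ R, f0 ρ = 1) (hs1 : ∑ ρ ∈ R, f1 ρ = 1)
    (n : ℕ) (hn : 2 ≤ n) (i : Fin n) :
    HasDerivAt (fun ε : ℝ =>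
        ∑ t : Fin n → {x // x ∈ R},
          (Real.exp (ε * (t i : ℝ) / 2) / ∑ k, Real.exp (ε * (t k : ℝ) / 2)) *
            (∏ k ∈ Finset.univ.erase i, f (t k)) * (f0 (t i) - f1 (t i)))
      ((((n : ℝ) - 1) / (2 * (n : ℝ) ^ 2)) *
        ((∑ ρ ∈ R, ρ * f0 ρ) - ∑ ρ ∈ R, ρ * f1 ρ)) 0 := by
  have hn0 : (n : ℝ) ≠ 0 := by positivity
  set S := {x // x ∈ R}
  set d : ℝ → ℝ := fun ρ => f0 ρ - f1 ρ with hd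
  -- sum of d over subtype is 0
  have hdsum : ∑ s : S, d (s : ℝ) = 0 := by
    rw [Finset.sum_coe_sort R (fun ρ => d ρ)]
    simp [hd, Finset.sum_sub_distrib, hs0, hs1]
  have hfsum : ∑ s : S, f (s : ℝ) = 1 := by
    rw [Finset.sum_coe_sort R f]; exact hfs
  -- factorization helper
  have factor : ∀ g : Fin n → S → ℝ,
      ∑ t : Fin n → S, ∏ j, g j (t j) = ∏ j, ∑ s : S, g j s :=
    fun g => (Fintype.prod_sum g).symm
  -- generic sums
  have split : ∀ (g : S → ℝ) (t : Fin n → S),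
      (∏ j, (fun j : Fin n => if j = i then g else fun s : S => f (s : ℝ)) j (t j))
        = g (t i) * ∏ k ∈ Finset.univ.erase i, f (t k) := by
    intro g t
    rw [← Finset.mul_prod_erase Finset.univ _ (Finset.mem_univ i)]
    simp only [if_pos rfl]
    congr 1
    exact Finset.prod_congr rfl fun k hk => by
      simp [Finset.ne_of_mem_erase hk]
  have sum_of : ∀ g : S → ℝ,
      ∑ t : Fin n → S, g (t i) * ∏ k ∈ Finset.univ.erase i, f (t k)
        = (∑ s : S, g s) * ∏ _k ∈ Finset.univ.erase i, (1 : ℝ) := by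
    intro g
    have := factor (fun j : Fin n => if j = i then g else fun s : S => f (s : ℝ))
    rw [Finset.sum_congr rfl (fun t _ => (split g t).symm), this,
      ← Finset.mul_prod_erase Finset.univ _ (Finset.mem_univ i)]
    simp only [if_pos rfl]
    congr 1
    exact Finset.prod_congr rfl fun k hk => by
      simp [Finset.ne_of_mem_erase hk, hfsum]
  have sum_of' : ∀ g : S → ℝ,
      ∑ t : Fin n → S, g (t i) * ∏ k ∈ Finset.univ.erase i, f (t k) = ∑ s : S, g s := by
    intro g; rw [sum_of g]; simp
  -- L1
  have L1 : ∑ t : Fin n → S, (∏ k ∈ Finset.univ.erase i, f (t k)) * d (t i) = 0 := by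
    calc ∑ t : Fin n → S, (∏ k ∈ Finset.univ.erase i, f (t k)) * d (t i)
        = ∑ t : Fin n → S, ((fun s : S => d (s : ℝ)) (t i)) * ∏ k ∈ Finset.univ.erase i, f (t k) :=
          Finset.sum_congr rfl fun t _ => by ring
      _ = ∑ s : S, d (s : ℝ) := sum_of' (fun s : S => d (s : ℝ))
      _ = 0 := hdsum
  have L2 : ∑ t : Fin n → S, (t i : ℝ) * ((∏ k ∈ Finset.univ.erase i, f (t k)) * d (t i))
      = (∑ ρ ∈ R, ρ * f0 ρ) - ∑ ρ ∈ R, ρ * f1 ρ := by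
    have h := sum_of' (fun s => (s : ℝ) * d (s : ℝ))
    calc ∑ t : Fin n → S, (t i : ℝ) * ((∏ k ∈ Finset.univ.erase i, f (t k)) * d (t i))
        = ∑ t : Fin n → S, ((fun s : S => (s : ℝ) * d (s : ℝ)) (t i))
            * ∏ k ∈ Finset.univ.erase i, f (t k) :=
          Finset.sum_congr rfl fun t _ => by ring
      _ = ∑ s : S, (s : ℝ) * d (s : ℝ) := h
      _ = ∑ ρ ∈ R, ρ * d ρ := Finset.sum_coe_sort R (fun ρ => ρ * d ρ)
      _ = (∑ ρ ∈ R, ρ * f0 ρ) - ∑ ρ ∈ R, ρ * f1 ρ := by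
          simp [hd, mul_sub, Finset.sum_sub_distrib]
  -- L3 : for k ≠ i the mixed sum vanishes
  have L3 : ∀ k : Fin n, k ≠ i →
      ∑ t : Fin n → S, (t k : ℝ) * ((∏ k ∈ Finset.univ.erase i, f (t k)) * d (t i)) = 0 := by
    intro k hk
    have key : ∑ t : Fin n → S,
        ∏ j, (fun j : Fin n => if j = i then (fun s : S => d (s : ℝ))
          else if j = k then (fun s : S => (s : ℝ) * f (s : ℝ))
          else fun s : S => f (s : ℝ)) j (t j)
        = ∏ j, ∑ s : S, (if j = i then (fun s : S => d (s : ℝ))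
          else if j = k then (fun s : S => (s : ℝ) * f (s : ℝ))
          else fun s : S => f (s : ℝ)) s := factor _
    have hzero : (∏ j, ∑ s : S, (if j = i then (fun s : S => d (s : ℝ))
          else if j = k then (fun s : S => (s : ℝ) * f (s : ℝ))
          else fun s : S => f (s : ℝ)) s) = 0 := by
      apply Finset.prod_eq_zero (Finset.mem_univ i)
      rw [if_pos rfl]
      exact hdsum
    rw [← hzero, ← key]
    apply Finset.sum_congr rfl
    intro t _
    have hkmem : k ∈ Finset.univ.erase i := Finset.mem_erase.mpr ⟨hk, Finset.mem_univ k⟩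
    conv_rhs => rw [← Finset.mul_prod_erase Finset.univ _ (Finset.mem_univ i)]
    conv_rhs => rw [← Finset.mul_prod_erase _ _ hkmem]
    conv_lhs => rw [← Finset.mul_prod_erase _ _ hkmem]
    beta_reduce
    have hcong : ∀ j ∈ (Finset.univ.erase i).erase k,
        (if j = i then (fun s : S => d (s : ℝ))
          else if j = k then (fun s : S => (s : ℝ) * f (s : ℝ))
          else fun s : S => f (s : ℝ)) (t j) = f (t j) := by
      intro j hj
      have h1 : j ≠ k := Finset.ne_of_mem_erase hj
      have h2 : j ≠ i := Finset.ne_of_mem_erase (Finset.mem_of_mem_erase hj)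
      rw [if_neg h2, if_neg h1]
    rw [if_pos rfl, if_neg hk, if_pos rfl, Finset.prod_congr rfl hcong]
    ring
  -- per-term derivative
  have key : ∀ t : Fin n → S,
      HasDerivAt (fun ε : ℝ =>
        (Real.exp (ε * (t i : ℝ) / 2) / ∑ k, Real.exp (ε * (t k : ℝ) / 2)) *
          (∏ k ∈ Finset.univ.erase i, f (t k)) * (f0 (t i) - f1 (t i)))
        ((((t i : ℝ) / 2 * n - ∑ k, (t k : ℝ) / 2) / (n : ℝ) ^ 2) *
          (∏ k ∈ Finset.univ.erase i, f (t k)) * (f0 (t i) - f1 (t i))) 0 := by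
    intro t
    have hnum : HasDerivAt (fun ε : ℝ => Real.exp (ε * (t i : ℝ) / 2)) ((t i : ℝ) / 2) 0 := by
      have h1 : HasDerivAt (fun ε : ℝ => ε * (t i : ℝ) / 2) ((t i : ℝ) / 2) 0 :=
        (hasDerivAt_mul_const ((t i : ℝ))).div_const 2
      simpa using h1.exp
    have hden : HasDerivAt (fun ε : ℝ => ∑ k, Real.exp (ε * (t k : ℝ) / 2))
        (∑ k, (t k : ℝ) / 2) 0 := by
      apply HasDerivAt.fun_sum
      intro k _
      have h1 : HasDerivAt (fun ε : ℝ => ε * (t k : ℝ) / 2) ((t k : ℝ) / 2) 0 :=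
        (hasDerivAt_mul_const ((t k : ℝ))).div_const 2
      simpa using h1.exp
    have hdval : (∑ k, Real.exp ((0:ℝ) * (t k : ℝ) / 2)) = (n : ℝ) := by simp
    have hne : (∑ k, Real.exp ((0:ℝ) * (t k : ℝ) / 2)) ≠ 0 := by rw [hdval]; exact hn0
    have hq := hnum.div hden hne
    have := (hq.mul_const (∏ k ∈ Finset.univ.erase i, f (t k))).mul_const
      (f0 (t i) - f1 (t i))
    refine this.congr_deriv ?_
    rw [hdval]
    simp
  have total := HasDerivAt.fun_sum (fun t (_ : t ∈ (Finset.univ : Finset (Fin n → S))) => key t)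
  refine total.congr_deriv ?_
  -- now the big sum computation
  have expand : ∀ t : Fin n → S,
      (((t i : ℝ) / 2 * n - ∑ k, (t k : ℝ) / 2) / (n : ℝ) ^ 2) *
          (∏ k ∈ Finset.univ.erase i, f (t k)) * (f0 (t i) - f1 (t i))
      = ((n : ℝ) / (2 * (n : ℝ) ^ 2)) *
          ((t i : ℝ) * ((∏ k ∈ Finset.univ.erase i, f (t k)) * d (t i)))
        - (1 / (2 * (n : ℝ) ^ 2)) *
          ∑ k, ((t k : ℝ) * ((∏ k ∈ Finset.univ.erase i, f (t k)) * d (t i))) := by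
    intro t
    rw [← Finset.sum_mul, ← Finset.sum_div]
    simp only [hd]
    field_simp
  rw [Finset.sum_congr rfl (fun t _ => expand t), Finset.sum_sub_distrib,
    ← Finset.mul_sum, ← Finset.mul_sum, L2]
  have swap : ∑ t : Fin n → S, ∑ k, ((t k : ℝ) * ((∏ k ∈ Finset.univ.erase i, f (t k)) * d (t i)))
      = ∑ k, ∑ t : Fin n → S, ((t k : ℝ) * ((∏ k ∈ Finset.univ.erase i, f (t k)) * d (t i))) :=
    Finset.sum_comm
  rw [swap]
  rw [Finset.sum_eq_single_of_mem i (Finset.mem_univ i) (fun k _ hk => L3 k hk), L2]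
  field_simp
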